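/- In the Yokonuma-type Hecke algebra 𝔗 of U-biinvariant functions on G^{0F}, the elements T_s (s ∈ I) defined by T_s = k_{ṡ} Σ_λ √(θ^λ_F(α̌_s(−1))) 1_λ satisfy the quadratic relation T_s² = q + (q−1) Σ_{λ : θ^λ_F∘α̌_s = 1} T_s 1_λ, given the Yokonuma relations k_{ṡ}k_{ṡ} = q·k_{α̌_s(−1)} + Σ_{a∈𝔽_q^*} k_{ṡ} k_{α̌_s(a)} and k_ν k_{ν'} = k_{νν'} for reduced products, and 1_λ = |T^F|⁻¹ Σ_{t∈T^F} θ^λ_F(t) k_t. -/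

import Mathlib

lemma charCardLe {G E ι : Type*} [CommMonoid G] [Fintype G] [Field E] [Fintype ι]
    (c : ι → (G →* Eˣ)) (hc : Function.Injective c) :
    Fintype.card ι ≤ Fintype.card G := by
  have h1 : Function.Injective (fun i => ((Units.coeHom E).comp (c i) : G →* E)) := by
    intro i j h
    apply hc
    ext g
    exact DFunLike.congr_fun h g
  have h2 := (linearIndependent_monoidHom G E).comp _ h1
  have h3 := h2.fintype_card_le_finrank
  rwa [Module.finrank_fintype_fun_eq_card] at h3

lemma charSumZero {G E : Type*} [CommGroup G] [Fintype G] [Field E]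
    (χ : G →* Eˣ) (h : χ ≠ 1) : ∑ g : G, ((χ g : Eˣ) : E) = 0 := by
  have : ((Units.coeHom E).comp χ) ≠ 1 := by
    intro hh
    apply h
    ext g
    simpa using DFunLike.congr_fun hh g
  simpa using sum_hom_units_eq_zero ((Units.coeHom E).comp χ) this

/-- 35.3: in the Yokonuma-type Hecke algebra (basis elements `kt t` for the torus
points, `kds` for the simple reflection, idempotents `1_λ` built from the characters
`θ λ`), the element `T_s = kds * Σ_λ √(θ^λ(α̌_s(−1))) 1_λ` satisfies the quadratic
relation `T_s² = q + (q−1) Σ_{λ : θ^λ∘α̌_s = 1} T_s 1_λ`. -/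
theorem stmt_17 {E A TF Fq Λ : Type*} [Field E] [Ring A] [Algebra E A]
    [CommGroup TF] [Fintype TF] [Field Fq] [Fintype Fq]
    [DecidableEq Fq] [Fintype Λ] [DecidableEq Λ]
    (kt : TF → A) (kds : A) (chk : Fqˣ →* TF) (σ : TF ≃* TF)
    (θ : Λ → TF →* Eˣ) (sqrt : E → E) (im : E)
    [DecidablePred fun l : Λ => ∀ a : Fqˣ, θ l (chk a) = 1]
    (hcard : (Fintype.card TF : E) ≠ 0)
    (hkt : ∀ t t' : TF, kt t * kt t' = kt (t * t'))
    (hkone : kt 1 = 1)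
    (hcomm : ∀ t : TF, kds * kt t = kt (σ t) * kds)
    (hσ : ∀ a : Fqˣ, σ (chk a) = chk a⁻¹)
    (hθinj : Function.Injective θ)
    (hθall : ∀ χ : TF →* Eˣ, ∃ l : Λ, θ l = χ)
    (hsep : ∀ t : TF, t ≠ 1 → ∃ l : Λ, θ l t ≠ 1)
    (him : im * im = -1) (hs1 : sqrt 1 = 1) (hsm1 : sqrt (-1) = im)
    (hquad : kds * kds = (Fintype.card Fq : E) • kt (chk (-1)) +
      ∑ aa : Fqˣ, kds * kt (chk aa)) :
    let onel : Λ → A := fun l => (Fintype.card TF : E)⁻¹ •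
      ∑ t : TF, ((θ l t : Eˣ) : E) • kt t
    let Ts : A := kds * ∑ l : Λ, sqrt ((θ l (chk (-1)) : Eˣ) : E) • onel l
    Ts * Ts = (Fintype.card Fq : E) • (1 : A) +
      ((Fintype.card Fq : E) - 1) •
        ∑ l ∈ Finset.univ.filter (fun l : Λ => ∀ aa : Fqˣ, θ l (chk aa) = 1),
          Ts * onel l := by
  intro onel Ts
  classical
  set N : E := (Fintype.card TF : E) with hN
  set q : E := (Fintype.card Fq : E) with hq
  set m : TF := chk (-1) with hmdef
  set c : Λ → E := fun l => sqrt ((θ l m : Eˣ) : E) with hc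
  set v : Λ → E := fun l => ((θ l m : Eˣ) : E) with hv
  have onel_def : ∀ l, onel l = N⁻¹ • ∑ t : TF, ((θ l t : Eˣ) : E) • kt t := fun _ => rfl
  have Ts_def : Ts = kds * ∑ l : Λ, c l • onel l := rfl
  -- basic facts about m
  have hmm : m * m = 1 := by
    rw [hmdef, ← map_mul]
    norm_num
  have hσm : σ m = m := by rw [hmdef, hσ]; norm_num
  have hum : ∀ l, θ l m * θ l m = 1 := by
    intro l; rw [← map_mul, hmm, map_one]
  have huminv : ∀ l, (θ l m)⁻¹ = θ l m := by
    intro l; exact (inv_eq_of_mul_eq_one_right (hum l))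
  have hvv : ∀ l, v l * v l = 1 := by
    intro l
    have := congrArg (fun u : Eˣ => (u : E)) (hum l)
    simpa using this
  have hcc : ∀ l, c l * c l = v l := by
    intro l
    have hcl : c l = sqrt (v l) := rfl
    rcases mul_self_eq_one_iff.mp (hvv l) with h | h
    · rw [hcl, h, hs1, mul_one]
    · rw [hcl, h, hsm1]; exact him
  -- kt t * onel l
  have kt_onel : ∀ (t : TF) (l : Λ), kt t * onel l = (((θ l t)⁻¹ : Eˣ) : E) • onel l := by
    intro t l
    calc kt t * onel l = N⁻¹ • ∑ t' : TF, ((θ l t' : Eˣ) : E) • kt (t * t') := by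
          rw [onel_def, mul_smul_comm, Finset.mul_sum]
          simp only [mul_smul_comm, hkt]
      _ = N⁻¹ • ∑ s : TF, ((((θ l t)⁻¹ : Eˣ) : E) * ((θ l s : Eˣ) : E)) • kt s := by
          congr 1
          refine Fintype.sum_bijective (t * ·) (Group.mulLeft_bijective t) _ _ (fun t' => ?_)
          congr 1
          rw [map_mul]
          push_cast
          rw [← mul_assoc, inv_mul_cancel₀ (Units.ne_zero _), one_mul]
      _ = (((θ l t)⁻¹ : Eˣ) : E) • onel l := by
          rw [onel_def, smul_smul, Finset.smul_sum, Finset.smul_sum]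
          refine Finset.sum_congr rfl (fun s _ => ?_)
          rw [smul_smul, smul_smul]
          congr 1
          ring
  -- onel l * onel l'
  have expand : ∀ l l' : Λ, onel l * onel l' =
      (N⁻¹ * ∑ t : TF, ((θ l t : Eˣ) : E) * (((θ l' t)⁻¹ : Eˣ) : E)) • onel l' := by
    intro l l'
    conv_lhs => rw [onel_def l]
    rw [smul_mul_assoc, Finset.sum_mul]
    simp only [smul_mul_assoc, kt_onel, smul_smul]
    rw [← Finset.sum_smul, smul_smul]
  have onel_mul : ∀ l l' : Λ, onel l * onel l' = if l = l' then onel l' else 0 := by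
    intro l l'
    rw [expand]
    by_cases h : l = l'
    · subst h
      rw [if_pos rfl]
      have : ∀ t : TF, ((θ l t : Eˣ) : E) * (((θ l t)⁻¹ : Eˣ) : E) = 1 := by
        intro t; rw [← Units.val_mul, mul_inv_cancel, Units.val_one]
      rw [Finset.sum_congr rfl (fun t _ => this t)]
      simp only [Finset.sum_const, Finset.card_univ, nsmul_eq_mul, mul_one]
      rw [← hN, inv_mul_cancel₀ hcard, one_smul]
    · rw [if_neg h]
      let χ : TF →* Eˣ :=
        { toFun := fun t => θ l t * (θ l' t)⁻¹
          map_one' := by simp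
          map_mul' := fun x y => by simp [map_mul, mul_inv, mul_mul_mul_comm, mul_comm] }
      have hχ : ∀ t, χ t = θ l t * (θ l' t)⁻¹ := fun _ => rfl
      have hne : χ ≠ 1 := by
        intro hh
        refine h (hθinj (MonoidHom.ext fun t => ?_))
        have h5 := DFunLike.congr_fun hh t
        rw [hχ] at h5
        simp only [MonoidHom.one_apply] at h5
        exact mul_inv_eq_one.mp h5
      have hz := charSumZero χ hne
      simp only [hχ, Units.val_mul] at hz
      rw [hz, mul_zero, zero_smul]
  -- cardinality
  have cardEq : Fintype.card Λ = Fintype.card TF := by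
    refine le_antisymm (charCardLe θ hθinj) ?_
    letI : Fintype (TF →* Eˣ) := Fintype.ofBijective θ ⟨hθinj, hθall⟩
    have hev : Function.Injective (fun t : TF =>
        ({ toFun := fun χ : TF →* Eˣ => χ t, map_one' := rfl,
           map_mul' := fun _ _ => rfl } : (TF →* Eˣ) →* Eˣ)) := by
      intro t t' h
      by_contra hne
      have h2 : t * t'⁻¹ ≠ 1 := by
        intro hh; exact hne (mul_inv_eq_one.mp hh)
      obtain ⟨l, hl⟩ := hsep _ h2
      apply hl
      have := DFunLike.congr_fun h (θ l)
      simp only [MonoidHom.coe_mk, OneHom.coe_mk] at this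
      rw [map_mul, map_inv, this, mul_inv_cancel]
    have := charCardLe _ hev
    rwa [Fintype.card_of_bijective (⟨hθinj, hθall⟩ : Function.Bijective θ)]
  -- column sums
  have colsum : ∀ t : TF, (∑ l : Λ, ((θ l t : Eˣ) : E)) = if t = 1 then N else 0 := by
    intro t
    by_cases h : t = 1
    · subst h
      simp only [map_one, Units.val_one, Finset.sum_const, Finset.card_univ, nsmul_eq_mul,
        mul_one, if_pos]
      rw [cardEq, hN]
    · rw [if_neg h]
      obtain ⟨l₀, hl₀⟩ := hsep t h
      set g : Λ → Λ := fun l => Classical.choose (hθall (θ l₀ * θ l)) with hg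
      have hgspec : ∀ l, θ (g l) = θ l₀ * θ l := fun l =>
        Classical.choose_spec (hθall (θ l₀ * θ l))
      have hgi : Function.Injective g := by
        intro a b hab
        refine hθinj (MonoidHom.ext fun u => ?_)
        have h5 : θ (g a) u = θ (g b) u := by rw [hab]
        rw [hgspec, hgspec] at h5
        simp only [MonoidHom.mul_apply] at h5
        exact mul_left_cancel h5
      have hgb : Function.Bijective g := Finite.injective_iff_bijective.mp hgi
      have key : ∑ l : Λ, ((θ l t : Eˣ) : E) =
          ((θ l₀ t : Eˣ) : E) * ∑ l : Λ, ((θ l t : Eˣ) : E) := by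
        conv_lhs => rw [← Function.Bijective.sum_comp hgb (fun l => ((θ l t : Eˣ) : E))]
        rw [Finset.mul_sum]
        refine Finset.sum_congr rfl (fun l _ => ?_)
        simp only [Function.comp, hgspec, MonoidHom.mul_apply, Units.val_mul]
      have hne1 : ((θ l₀ t : Eˣ) : E) ≠ 1 := by
        intro hh; exact hl₀ (Units.ext (by simpa using hh))
      have h2 : (((θ l₀ t : Eˣ) : E) - 1) * ∑ l : Λ, ((θ l t : Eˣ) : E) = 0 := by
        rw [sub_mul, one_mul, ← key, sub_self]
      rcases mul_eq_zero.mp h2 with h1 | h1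
      · exact absurd (by linear_combination h1 : ((θ l₀ t : Eˣ) : E) = 1) hne1
      · exact h1
  have sum_onel : ∑ l : Λ, onel l = 1 := by
    have step : ∑ l : Λ, onel l = N⁻¹ • ∑ t : TF, (∑ l : Λ, ((θ l t : Eˣ) : E)) • kt t := by
      simp only [onel_def, ← Finset.smul_sum]
      congr 1
      rw [Finset.sum_comm]
      refine Finset.sum_congr rfl (fun t _ => ?_)
      rw [Finset.sum_smul]
    rw [step]
    rw [Finset.sum_congr rfl (fun t _ => by rw [colsum t])]
    simp only [ite_smul, zero_smul]
    rw [Finset.sum_ite_eq' Finset.univ (1 : TF) (fun x => N • kt x)]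
    simp only [Finset.mem_univ, if_pos, hkone, smul_smul]
    rw [inv_mul_cancel₀ hcard, one_smul]
  -- tau
  have hτex : ∀ l : Λ, ∃ l', θ l' = (θ l).comp σ.toMonoidHom := fun l =>
    hθall ((θ l).comp σ.toMonoidHom)
  set τ : Λ → Λ := fun l => Classical.choose (hτex l) with hτdef
  have hτ : ∀ l t, θ (τ l) t = θ l (σ t) := by
    intro l t
    have := Classical.choose_spec (hτex l)
    rw [hτdef, this]
    rfl
  have hτinj : Function.Injective τ := by
    intro a b hab
    apply hθinj
    ext t
    have := congrArg (fun f => θ f (σ.symm t)) hab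
    rw [hτ, hτ, σ.apply_symm_apply] at this
    exact congrArg Units.val this
  have hτbij : Function.Bijective τ := Finite.injective_iff_bijective.mp hτinj
  have hτm : ∀ l, θ (τ l) m = θ l m := by intro l; rw [hτ, hσm]
  have hcτ : ∀ l, c (τ l) = c l := by intro l; rw [hc]; simp only [hτm]
  have hvτ : ∀ l, v (τ l) = v l := by intro l; rw [hv]; simp only [hτm]
  -- onel * kds
  have onel_kds : ∀ l, onel l * kds = kds * onel (τ l) := by
    intro l
    rw [onel_def l, onel_def (τ l), smul_mul_assoc, mul_smul_comm]
    congr 1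
    rw [Finset.sum_mul, Finset.mul_sum]
    exact (Fintype.sum_bijective σ σ.bijective
      (fun t => kds * ((((θ (τ l)) t : Eˣ) : E) • kt t))
      (fun s => ((((θ l) s : Eˣ) : E) • kt s) * kds)
      (fun t => by rw [mul_smul_comm, hcomm, hτ, smul_mul_assoc])).symm
  -- P and its properties
  set P : A := ∑ l : Λ, c l • onel l with hP
  have hP_onel : ∀ l : Λ, P * onel l = c l • onel l := by
    intro l
    rw [hP, Finset.sum_mul]
    rw [Finset.sum_congr rfl (fun l' _ => by rw [smul_mul_assoc, onel_mul])]
    simp only [smul_ite, smul_zero]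
    rw [Finset.sum_ite_eq' Finset.univ l (fun l' => c l' • onel l)]
    simp only [Finset.mem_univ, if_pos]
  have step1 : P * kds = kds * ∑ l : Λ, c l • onel (τ l) := by
    rw [hP, Finset.sum_mul, Finset.mul_sum]
    refine Finset.sum_congr rfl (fun l _ => ?_)
    rw [smul_mul_assoc, onel_kds]
    exact (mul_smul_comm _ _ _).symm
  have step2 : (∑ l : Λ, c l • onel (τ l)) * P = ∑ l : Λ, v l • onel (τ l) := by
    rw [Finset.sum_mul]
    refine Finset.sum_congr rfl (fun l _ => ?_)
    have h1 : onel (τ l) * P = c (τ l) • onel (τ l) := by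
      rw [hP, Finset.mul_sum]
      rw [Finset.sum_congr rfl (fun l' _ => by rw [mul_smul_comm, onel_mul])]
      simp only [smul_ite, smul_zero]
      rw [Finset.sum_ite_eq Finset.univ (τ l) (fun l' => c l' • onel l')]
      simp only [Finset.mem_univ, if_pos]
    rw [smul_mul_assoc, h1, smul_smul, hcτ, hcc]
  have reind : ∑ l : Λ, v l • onel (τ l) = ∑ l : Λ, v l • onel l := by
    rw [Finset.sum_congr rfl (fun l _ => by rw [← hvτ l])]
    exact Function.Bijective.sum_comp hτbij (fun l => v l • onel l)
  have key : Ts * Ts = ∑ l : Λ, v l • ((kds * kds) * onel l) := by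
    rw [Ts_def]
    calc (kds * P) * (kds * P) = kds * ((P * kds) * P) := by
          rw [mul_assoc kds P (kds * P), ← mul_assoc P kds P]
      _ = kds * ((kds * ∑ l : Λ, c l • onel (τ l)) * P) := by rw [step1]
      _ = (kds * kds) * ((∑ l : Λ, c l • onel (τ l)) * P) := by
          rw [mul_assoc kds (∑ l : Λ, c l • onel (τ l)) P, ← mul_assoc]
      _ = (kds * kds) * ∑ l : Λ, v l • onel l := by rw [step2, reind]
      _ = ∑ l : Λ, v l • ((kds * kds) * onel l) := by
          rw [Finset.mul_sum]
          simp only [mul_smul_comm]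
  have kds2_onel : ∀ l : Λ, (kds * kds) * onel l =
      (q * v l) • onel l +
        (if (∀ a : Fqˣ, θ l (chk a) = 1) then q - 1 else 0) • (kds * onel l) := by
    intro l
    rw [hquad, add_mul, smul_mul_assoc, kt_onel, Finset.sum_mul]
    congr 1
    · rw [smul_smul]
      congr 1
      rw [huminv]
    · rw [Finset.sum_congr rfl (fun a _ => by
        rw [mul_assoc, kt_onel, mul_smul_comm])]
      rw [← Finset.sum_smul]
      congr 1
      by_cases hl : ∀ a : Fqˣ, θ l (chk a) = 1
      · rw [if_pos hl]
        rw [Finset.sum_congr rfl (fun a _ => by rw [hl a, inv_one, Units.val_one])]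
        simp only [Finset.sum_const, Finset.card_univ, nsmul_eq_mul, mul_one]
        rw [Fintype.card_units, Nat.cast_sub Fintype.card_pos, Nat.cast_one, hq]
      · rw [if_neg hl]
        let χ2 : Fqˣ →* Eˣ :=
          { toFun := fun a => (θ l (chk a))⁻¹
            map_one' := by simp
            map_mul' := fun x y => by simp [map_mul, mul_inv, mul_comm] }
        have hχ2 : ∀ a, χ2 a = (θ l (chk a))⁻¹ := fun _ => rfl
        have hne2 : χ2 ≠ 1 := by
          intro hh
          apply hl
          intro a
          have h5 := DFunLike.congr_fun hh a
          rw [hχ2] at h5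
          simp only [MonoidHom.one_apply] at h5
          rwa [inv_eq_one] at h5
        have hz := charSumZero χ2 hne2
        simp only [hχ2] at hz
        exact hz
  have predv : ∀ l : Λ, (∀ a : Fqˣ, θ l (chk a) = 1) → v l = 1 := by
    intro l hl
    have h6 := hl (-1)
    rw [← hmdef] at h6
    show ((θ l m : Eˣ) : E) = 1
    rw [h6, Units.val_one]
  have predc : ∀ l : Λ, (∀ a : Fqˣ, θ l (chk a) = 1) → c l = 1 := by
    intro l hl
    show sqrt (v l) = 1
    rw [predv l hl, hs1]
  have Ts_onel : ∀ l : Λ, Ts * onel l = c l • (kds * onel l) := by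
    intro l
    rw [Ts_def, mul_assoc, hP_onel, mul_smul_comm]
  rw [key]
  rw [Finset.sum_congr rfl (fun l _ => show
    v l • ((kds * kds) * onel l) = (v l * (q * v l)) • onel l +
      (v l * if (∀ a : Fqˣ, θ l (chk a) = 1) then q - 1 else 0) • (kds * onel l) by
    rw [kds2_onel l, smul_add, smul_smul (v l), smul_smul (v l)])]
  rw [Finset.sum_add_distrib]
  congr 1
  · rw [Finset.sum_congr rfl (fun l _ => by
      have h6 : v l * (q * v l) = q := by
        calc v l * (q * v l) = q * (v l * v l) := by ring
          _ = q := by rw [hvv l, mul_one]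
      rw [h6])]
    calc ∑ l : Λ, q • onel l = q • ∑ l : Λ, onel l := Finset.smul_sum.symm
      _ = q • 1 := by rw [sum_onel]
  · rw [Finset.sum_congr rfl (fun l _ => show
      (v l * if (∀ a : Fqˣ, θ l (chk a) = 1) then q - 1 else 0) • (kds * onel l) =
        if (∀ a : Fqˣ, θ l (chk a) = 1) then (q - 1) • (Ts * onel l) else 0 by
      by_cases hl : ∀ a : Fqˣ, θ l (chk a) = 1
      · rw [if_pos hl, if_pos hl, predv l hl, one_mul, Ts_onel, predc l hl, one_smul]
      · rw [if_neg hl, if_neg hl, mul_zero, zero_smul])]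
    rw [← Finset.sum_filter]
    exact Finset.smul_sum.symm
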